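/- Let p be a prime, k a field of characteristic p, A a unital associative k-algebra, and d : A → A a k-linear derivation. On the k-module P = ⊕_{n≥1} A^{⊗n}, let b be the unsigned bar differential (acting as b_n on A^{⊗n}, with b_1 = 0), let L be the Leibniz extension of d (L(a_1⊗⋯⊗a_n) = ∑_i a_1⊗⋯⊗d(a_i)⊗⋯⊗a_n), and let σ ∈ End_k(P) be given by x ↦ x⊗1 on each A^{⊗n}. Then the total operator ∂_T := b + L satisfies ∂_T∘σ − σ∘∂_T = id_P, and consequently ∑_{i=0}^{p−1} ∂_T^{i}∘(−σ^{p−1})∘∂_T^{p−1−i} = id_P. (The augmented Mayer bar complex of a p-DG algebra, with its total p-differential, is null-homotopic.) -/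

import Mathlib

open TensorProduct

universe u

/-- `Tpow4M k A n` is the `(n+1)`-fold tensor power `A^{⊗(n+1)}` over `k`. -/
noncomputable def Tpow4M (k A : Type u) [CommRing k] [Ring A] [Algebra k A] :
    ℕ → ModuleCat.{u} k
  | 0 => ModuleCat.of k A
  | (n + 1) => ModuleCat.of k (TensorProduct k A (Tpow4M k A n))

variable (k A : Type u) [CommRing k] [Ring A] [Algebra k A]

/-- The unsigned bar map `b_{n+2} : A^{⊗(n+2)} → A^{⊗(n+1)}` (no signs). -/
noncomputable def bar4Map : (n : ℕ) → (↥(Tpow4M k A (n + 1)) →ₗ[k] ↥(Tpow4M k A n))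
  | 0 => LinearMap.mul' k A
  | (n + 1) =>
      ((LinearMap.rTensor (↥(Tpow4M k A n)) (LinearMap.mul' k A)
          ∘ₗ (TensorProduct.assoc k A A (↥(Tpow4M k A n))).symm.toLinearMap)
        + (LinearMap.lTensor A (bar4Map n) :
            A ⊗[k] (A ⊗[k] ↥(Tpow4M k A n)) →ₗ[k] A ⊗[k] ↥(Tpow4M k A n)))

/-- `σ_{n+1} : A^{⊗(n+1)} → A^{⊗(n+2)}`, `x ↦ x ⊗ 1`. -/
noncomputable def sig4Map : (n : ℕ) → (↥(Tpow4M k A n) →ₗ[k] ↥(Tpow4M k A (n + 1)))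
  | 0 => (TensorProduct.mk k A A).flip 1
  | (n + 1) =>
      (LinearMap.lTensor A (sig4Map n) :
        A ⊗[k] ↥(Tpow4M k A n) →ₗ[k] A ⊗[k] ↥(Tpow4M k A (n + 1)))

/-- The Leibniz extension `L : A^{⊗(n+1)} → A^{⊗(n+1)}` of a linear map `d : A → A`,
`a_1⊗⋯⊗a_m ↦ ∑_i a_1⊗⋯⊗d(a_i)⊗⋯⊗a_m`. -/
noncomputable def leib4Map (d : A →ₗ[k] A) :
    (n : ℕ) → (↥(Tpow4M k A n) →ₗ[k] ↥(Tpow4M k A n))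
  | 0 => d
  | (n + 1) =>
      ((LinearMap.rTensor (↥(Tpow4M k A n)) d :
            A ⊗[k] ↥(Tpow4M k A n) →ₗ[k] A ⊗[k] ↥(Tpow4M k A n))
        + LinearMap.lTensor A (leib4Map d n))

/-- `P = ⊕_{n ≥ 1} A^{⊗n}` as a `k`-module. -/
noncomputable abbrev stmt4P : Type u := DirectSum ℕ (fun n => ↥(Tpow4M k A n))

/-- The unsigned bar differential `b` on `P = ⊕_{n≥1} A^{⊗n}` (acting by `b_n` on
`A^{⊗n}`, with `b_1 = 0`). -/
noncomputable def bar4Op : Module.End k (stmt4P k A) :=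
  DirectSum.toModule k ℕ (stmt4P k A)
    (fun n =>
      match n with
      | 0 => 0
      | (m + 1) => DirectSum.lof k ℕ (fun i => ↥(Tpow4M k A i)) m ∘ₗ bar4Map k A m)

/-- The operator `σ : x ↦ x ⊗ 1` on `P`. -/
noncomputable def sig4Op : Module.End k (stmt4P k A) :=
  DirectSum.toModule k ℕ (stmt4P k A)
    (fun n => DirectSum.lof k ℕ (fun i => ↥(Tpow4M k A i)) (n + 1) ∘ₗ sig4Map k A n)

/-- The Leibniz extension of `d` as an operator on `P`. -/
noncomputable def leib4Op (d : A →ₗ[k] A) : Module.End k (stmt4P k A) :=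
  DirectSum.toModule k ℕ (stmt4P k A)
    (fun n => DirectSum.lof k ℕ (fun i => ↥(Tpow4M k A i)) n ∘ₗ leib4Map k A d n)


open DirectSum

section Part1
variable {k A : Type u} [CommRing k] [Ring A] [Algebra k A]

private lemma sig_succ_apply (n : ℕ) (a : A) (y : ↥(Tpow4M k A n)) :
    sig4Map k A (n + 1) (a ⊗ₜ y) = a ⊗ₜ (sig4Map k A n y) := rfl

@[elab_as_elim]
private lemma tpow_induction {n : ℕ} {P : ↥(Tpow4M k A (n + 1)) → Prop}
    (x : ↥(Tpow4M k A (n + 1))) (zero : P 0)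
    (tmul : ∀ (a : A) (y : ↥(Tpow4M k A n)), P (a ⊗ₜ y))
    (add : ∀ x y, P x → P y → P (x + y)) : P x :=
  TensorProduct.induction_on x zero tmul add

private lemma sig_zero_apply (b : ↥(Tpow4M k A 0)) :
    sig4Map k A 0 b = b ⊗ₜ[k] (1 : A) := rfl

private lemma bar_zero_apply (a : A) (b : ↥(Tpow4M k A 0)) :
    bar4Map k A 0 (a ⊗ₜ b) = a * (show A from b) := rfl

private lemma bar_succ_apply (n : ℕ) (a : A) (y : ↥(Tpow4M k A (n + 1))) :
    bar4Map k A (n + 1) (a ⊗ₜ y)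
      = @HAdd.hAdd (↥(Tpow4M k A (n + 1))) (↥(Tpow4M k A (n + 1))) (↥(Tpow4M k A (n + 1))) _
          ((LinearMap.rTensor (↥(Tpow4M k A n)) (LinearMap.mul' k A))
          ((TensorProduct.assoc k A A (↥(Tpow4M k A n))).symm (a ⊗ₜ y)))
        (a ⊗ₜ (bar4Map k A n y)) := by
  rw [bar4Map]
  rfl

private lemma leib_succ_apply (d : A →ₗ[k] A) (n : ℕ) (a : A) (y : ↥(Tpow4M k A n)) :
    leib4Map k A d (n + 1) (a ⊗ₜ y) = @HAdd.hAdd (↥(Tpow4M k A (n + 1)))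
      (↥(Tpow4M k A (n + 1))) (↥(Tpow4M k A (n + 1))) _ ((d a) ⊗ₜ y) (a ⊗ₜ (leib4Map k A d n y)) := by
  rw [leib4Map]
  rfl

private lemma F_lTensor {M N : Type u} [AddCommGroup M] [AddCommGroup N]
    [Module k M] [Module k N] (g : M →ₗ[k] N) (a : A) (z : A ⊗[k] M) :
    (LinearMap.rTensor N (LinearMap.mul' k A))
        ((TensorProduct.assoc k A A N).symm (a ⊗ₜ (LinearMap.lTensor A g z)))
      = LinearMap.lTensor A g
        ((LinearMap.rTensor M (LinearMap.mul' k A))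
          ((TensorProduct.assoc k A A M).symm (a ⊗ₜ z))) := by
  induction z using TensorProduct.induction_on with
  | zero => simp
  | tmul a' w => simp [TensorProduct.assoc_symm_tmul]
  | add z₁ z₂ h₁ h₂ =>
      simp only [map_add, TensorProduct.tmul_add] at *
      rw [h₁, h₂]

private lemma E1_zero (x : ↥(Tpow4M k A 0)) :
    bar4Map k A 0 (sig4Map k A 0 x) = x := by
  rw [sig_zero_apply]
  show LinearMap.mul' k A ((x : A) ⊗ₜ[k] (1 : A)) = x
  exact (LinearMap.mul'_apply).trans (mul_one _)

private lemma E1_succ : ∀ (m : ℕ) (x : ↥(Tpow4M k A (m + 1))),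
    bar4Map k A (m + 1) (sig4Map k A (m + 1) x)
      = x + sig4Map k A m (bar4Map k A m x) := by
  intro m
  induction m with
  | zero =>
      intro x
      induction x using tpow_induction with
      | zero => simp
      | tmul a b =>
          have hb : bar4Map k A 0 (b ⊗ₜ[k] (1 : A)) = b := by
            show (show A from b) * 1 = (show A from b)
            exact mul_one _
          erw [sig_succ_apply, sig_zero_apply, bar_succ_apply, bar_zero_apply,
            TensorProduct.assoc_symm_tmul, LinearMap.rTensor_tmul, LinearMap.mul'_apply,
            mul_one]
          abel
      | add y z hy hz =>
          simp only [map_add, hy, hz]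
          abel
  | succ m ih =>
      intro x
      have hs : ∀ z : ↥(Tpow4M k A (m + 1)),
          sig4Map k A (m + 1) z = LinearMap.lTensor A (sig4Map k A m) z := fun _ => rfl
      induction x using tpow_induction with
      | zero => simp
      | tmul a y =>
          rw [sig_succ_apply, bar_succ_apply, ih y, hs y]
          erw [F_lTensor]
          rw [bar_succ_apply]
          simp only [map_add, sig_succ_apply, TensorProduct.tmul_add, hs]
          erw [map_add (LinearMap.lTensor A (sig4Map k A m)), LinearMap.lTensor_tmul A (sig4Map k A m) a (bar4Map k A m y)]
          abel
      | add y z hy hz =>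
          simp only [map_add, hy, hz]
          abel

private lemma E2 (d : A →ₗ[k] A) (hd1 : d 1 = 0) : ∀ (n : ℕ) (x : ↥(Tpow4M k A n)),
    leib4Map k A d (n + 1) (sig4Map k A n x) = sig4Map k A n (leib4Map k A d n x) := by
  intro n
  induction n with
  | zero =>
      intro x
      have h0 : leib4Map k A d 0 ((show ↥(Tpow4M k A 0) from (1 : A))) = 0 := hd1
      erw [sig_zero_apply, leib_succ_apply, h0, TensorProduct.tmul_zero, add_zero,
        sig_zero_apply]
      rfl
  | succ n ih =>
      intro x
      induction x using tpow_induction with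
      | zero => simp
      | tmul a y =>
          erw [sig_succ_apply, leib_succ_apply, ih y, leib_succ_apply, map_add,
            sig_succ_apply, sig_succ_apply]
      | add y z hy hz =>
          simp only [map_add, hy, hz]

end Part1

open Finset LinearMap in
section

section Key
variable {R : Type*} [Ring R]

private lemma comm_pow_aux (D σ : R) (h : D * σ - σ * D = 1) :
    ∀ t : ℕ, D * σ ^ (t + 1) - σ ^ (t + 1) * D = (t + 1) • σ ^ t := by
  intro t
  induction t with
  | zero => simpa using h
  | succ t ih =>
      have hDσ : D * σ = σ * D + 1 := by rw [← h]; abel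
      have ihD : D * σ ^ (t+1) = σ ^ (t+1) * D + (t+1) • σ ^ t := by rw [← ih]; abel
      have key : D * σ ^ (t+2) = σ ^ (t+2) * D + (t+2) • σ ^ (t+1) := by
        calc D * σ ^ (t+2) = (D * σ ^ (t+1)) * σ := by
              rw [pow_succ, mul_assoc]
          _ = (σ ^ (t+1) * D + (t+1) • σ ^ t) * σ := by rw [ihD]
          _ = σ ^ (t+1) * (D * σ) + (t+1) • σ ^ (t+1) := by
              rw [add_mul, mul_assoc, smul_mul_assoc, ← pow_succ]
          _ = σ ^ (t+2) * D + (t+2) • σ ^ (t+1) := by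
              rw [hDσ, mul_add, mul_one, ← mul_assoc, ← pow_succ,
                succ_nsmul ((σ : R) ^ (t+1)) (t+1)]
              abel
      rw [key]; abel

private lemma ad_pow_sigma (D σ : R) (h : D * σ - σ * D = 1) :
    ∀ j m : ℕ, j ≤ m →
      ((mulLeft ℤ D - mulRight ℤ D) ^ j) (σ ^ m) = (m.descFactorial j) • σ ^ (m - j) := by
  intro j
  induction j with
  | zero => intro m _; simp
  | succ j ih =>
      intro m hm
      rw [pow_succ', Module.End.mul_apply, ih m (by omega), map_nsmul]
      have h1 : m - j = (m - j - 1) + 1 := by omega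
      have h2 : (mulLeft ℤ D - mulRight ℤ D) (σ ^ (m - j)) = (m - j) • σ ^ (m - j - 1) := by
        rw [LinearMap.sub_apply, mulLeft_apply, mulRight_apply, h1, comm_pow_aux D σ h]
        simp
      rw [h2, smul_smul, Nat.descFactorial_succ, Nat.mul_comm]
      congr 2
      all_goals omega

end Key

section Key2
variable {R : Type*} [Ring R]

private lemma expand_pow_mul (D : R) (n : ℕ) (c : R) :
    D ^ n * c = ∑ j ∈ range (n + 1),
      (n.choose j) • (((mulLeft ℤ D - mulRight ℤ D) ^ j) c * D ^ (n - j)) := by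
  set a := mulLeft ℤ D - mulRight ℤ D with ha
  set r := mulRight ℤ D with hr
  have hcomm : Commute a r := by
    apply LinearMap.ext
    intro x
    simp only [ha, hr, Module.End.mul_apply, LinearMap.sub_apply, mulLeft_apply, mulRight_apply,
      map_sub, sub_mul, mul_sub, mul_assoc]
  have swap : ∀ (j m : ℕ) (c : R), (a ^ j) (c * D ^ m) = (a ^ j) c * D ^ m := by
    intro j m c
    have h1 : (a ^ j * r ^ m) c = (r ^ m * a ^ j) c := by rw [(hcomm.pow_pow j m).eq]
    simpa [Module.End.mul_apply, hr, pow_mulRight, mulRight_apply] using h1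
  have hL : mulLeft ℤ D = a + r := by rw [ha, hr]; abel
  have h2 : D ^ n * c = ((mulLeft ℤ D) ^ n) c := by
    rw [pow_mulLeft, mulLeft_apply]
  rw [h2, hL, hcomm.add_pow]
  rw [LinearMap.coe_sum, Finset.sum_apply]
  refine Finset.sum_congr rfl fun j hj => ?_
  rw [Module.End.mul_apply, Module.End.mul_apply, Module.End.natCast_apply, map_nsmul,
    map_nsmul]
  congr 1
  have : (r ^ (n - j)) c = c * D ^ (n - j) := by rw [hr, pow_mulRight, mulRight_apply]
  rw [this, swap]

private lemma key_sum (p : ℕ) (hp : p.Prime) (hchar : ∀ x : R, p • x = 0) (D σ : R)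
    (h : D * σ - σ * D = 1) :
    ∑ i ∈ range p, D ^ i * (-(σ ^ (p - 1))) * D ^ (p - 1 - i) = 1 := by
  haveI : Fact p.Prime := ⟨hp⟩
  set a := mulLeft ℤ D - mulRight ℤ D with ha
  set c : R := -(σ ^ (p - 1)) with hc
  have step1 : ∑ i ∈ range p, D ^ i * c * D ^ (p - 1 - i)
      = ∑ i ∈ range p, ∑ j ∈ range (i + 1),
          (i.choose j) • ((a ^ j) c * D ^ (p - 1 - j)) := by
    refine Finset.sum_congr rfl fun i hi => ?_
    rw [expand_pow_mul D i c, Finset.sum_mul]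
    refine Finset.sum_congr rfl fun j hj => ?_
    rw [smul_mul_assoc, mul_assoc, ← pow_add]
    congr 3
    simp only [Finset.mem_range] at hi hj
    omega
  have step2 : ∑ i ∈ range p, ∑ j ∈ range (i + 1),
          (i.choose j) • ((a ^ j) c * D ^ (p - 1 - j))
      = ∑ j ∈ range p, ∑ i ∈ Finset.Ico j p,
          (i.choose j) • ((a ^ j) c * D ^ (p - 1 - j)) := by
    apply Finset.sum_comm'
    intro i j
    simp only [Finset.mem_range, Finset.mem_Ico]
    omega
  have step3 : ∀ j, ∑ i ∈ Finset.Ico j p, (i.choose j) • ((a ^ j) c * D ^ (p - 1 - j))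
      = (p.choose (j + 1)) • ((a ^ j) c * D ^ (p - 1 - j)) := by
    intro j
    rw [← Finset.sum_smul]
    congr 1
    have hIco : Finset.Ico j p = Finset.Icc j (p - 1) := by
      rw [← Finset.Ico_add_one_right_eq_Icc, Nat.sub_add_cancel hp.one_le]
    rw [hIco, Nat.sum_Icc_choose, Nat.sub_add_cancel hp.one_le]
  have hsmul_mod : ∀ (n : ℕ) (x : R), n • x = (n % p) • x := by
    intro n x
    conv_lhs => rw [← Nat.div_add_mod n p]
    rw [add_nsmul, mul_smul, hchar, zero_add]
  have step4 : ∑ j ∈ range p, (p.choose (j + 1)) • ((a ^ j) c * D ^ (p - 1 - j))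
      = (a ^ (p - 1)) c := by
    rw [Finset.sum_eq_single (p - 1)]
    · have h1 : p - 1 + 1 = p := Nat.sub_add_cancel hp.one_le
      rw [h1, Nat.choose_self, one_smul, Nat.sub_self, pow_zero, mul_one]
    · intro j hj hne
      simp only [Finset.mem_range] at hj
      obtain ⟨t, ht⟩ := hp.dvd_choose_self (Nat.succ_ne_zero j) (by omega)
      rw [ht, Nat.mul_comm, mul_smul, hchar, smul_zero]
    · intro hmem
      exact absurd (Finset.mem_range.mpr (Nat.sub_lt hp.pos one_pos)) hmem
  have step5 : (a ^ (p - 1)) c = -(Nat.factorial (p - 1) • (1 : R)) := by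
    rw [hc, map_neg, ad_pow_sigma D σ h (p - 1) (p - 1) le_rfl,
      Nat.descFactorial_self, Nat.sub_self, pow_zero]
  have hwil : Nat.factorial (p - 1) % p = (p - 1) % p := by
    have hw : ((Nat.factorial (p - 1) : ℕ) : ZMod p) = ((p - 1 : ℕ) : ZMod p) := by
      rw [ZMod.wilsons_lemma, Nat.cast_sub hp.one_le, ZMod.natCast_self, Nat.cast_one,
        zero_sub]
    exact (ZMod.natCast_eq_natCast_iff _ _ _).mp hw
  have hfinal : -(Nat.factorial (p - 1) • (1 : R)) = 1 := by
    rw [hsmul_mod, hwil, ← hsmul_mod]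
    have hadd : (p - 1) • (1 : R) + 1 • (1 : R) = p • (1 : R) := by
      rw [← add_nsmul, Nat.sub_add_cancel hp.one_le]
    rw [hchar, one_smul] at hadd
    have : (p - 1) • (1 : R) = -1 := eq_neg_of_add_eq_zero_left hadd
    rw [this, neg_neg]
  calc ∑ i ∈ range p, D ^ i * c * D ^ (p - 1 - i)
      = ∑ j ∈ range p, (p.choose (j + 1)) • ((a ^ j) c * D ^ (p - 1 - j)) := by
        rw [step1, step2]; exact Finset.sum_congr rfl fun j _ => step3 j
    _ = (a ^ (p - 1)) c := step4
    _ = -(Nat.factorial (p - 1) • (1 : R)) := step5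
    _ = 1 := hfinal

end Key2


section Ops
variable {k A : Type u} [CommRing k] [Ring A] [Algebra k A]

private lemma bar4Op_lof_zero (x : ↥(Tpow4M k A 0)) :
    bar4Op k A (DirectSum.lof k ℕ (fun i => ↥(Tpow4M k A i)) 0 x) = 0 := by
  simp [bar4Op, DirectSum.toModule_lof]

private lemma bar4Op_lof_succ (m : ℕ) (x : ↥(Tpow4M k A (m + 1))) :
    bar4Op k A (DirectSum.lof k ℕ (fun i => ↥(Tpow4M k A i)) (m + 1) x)
      = DirectSum.lof k ℕ (fun i => ↥(Tpow4M k A i)) m (bar4Map k A m x) := by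
  simp [bar4Op, DirectSum.toModule_lof]

private lemma sig4Op_lof (n : ℕ) (x : ↥(Tpow4M k A n)) :
    sig4Op k A (DirectSum.lof k ℕ (fun i => ↥(Tpow4M k A i)) n x)
      = DirectSum.lof k ℕ (fun i => ↥(Tpow4M k A i)) (n + 1) (sig4Map k A n x) := by
  simp [sig4Op, DirectSum.toModule_lof]

private lemma leib4Op_lof (d : A →ₗ[k] A) (n : ℕ) (x : ↥(Tpow4M k A n)) :
    leib4Op k A d (DirectSum.lof k ℕ (fun i => ↥(Tpow4M k A i)) n x)
      = DirectSum.lof k ℕ (fun i => ↥(Tpow4M k A i)) n (leib4Map k A d n x) := by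
  simp [leib4Op, DirectSum.toModule_lof]

private lemma comm_main (d : A →ₗ[k] A) (hd1 : d 1 = 0) :
    (bar4Op k A + leib4Op k A d) * sig4Op k A
      - sig4Op k A * (bar4Op k A + leib4Op k A d) = 1 := by
  apply DirectSum.linearMap_ext
  intro n
  apply LinearMap.ext
  intro x
  simp only [LinearMap.coe_comp, Function.comp_apply, LinearMap.sub_apply,
    Module.End.mul_apply, LinearMap.add_apply, Module.End.one_apply, map_add]
  cases n with
  | zero =>
      rw [sig4Op_lof, bar4Op_lof_succ, leib4Op_lof, bar4Op_lof_zero, leib4Op_lof,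
        sig4Op_lof, E1_zero, E2 d hd1 0 x]
      simp
  | succ m =>
      rw [sig4Op_lof, bar4Op_lof_succ, leib4Op_lof, bar4Op_lof_succ, leib4Op_lof,
        sig4Op_lof, sig4Op_lof, E1_succ m x, E2 d hd1 (m + 1) x, map_add]
      abel

end Ops

/-- for a `k`-linear derivation `d` of `A` over a field of characteristic
`p`, the total operator `∂_T = b + L` on `P = ⊕_{n≥1} A^{⊗n}` satisfies
`∂_T∘σ − σ∘∂_T = id`, and consequently
`∑_{i=0}^{p−1} ∂_T^i ∘ (−σ^{p−1}) ∘ ∂_T^{p−1−i} = id`: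
the augmented Mayer bar complex of a `p`-DG algebra is null-homotopic. -/
theorem stmt_4 (p : ℕ) (hp : p.Prime) (k A : Type u) [Field k] [CharP k p]
    [Ring A] [Algebra k A] (d : A →ₗ[k] A)
    (hd : ∀ a b : A, d (a * b) = d a * b + a * d b) :
    (bar4Op k A + leib4Op k A d) * sig4Op k A - sig4Op k A * (bar4Op k A + leib4Op k A d)
        = 1 ∧
      (Finset.range p).sum
          (fun i =>
            (bar4Op k A + leib4Op k A d) ^ i * (-(sig4Op k A ^ (p - 1)))
              * (bar4Op k A + leib4Op k A d) ^ (p - 1 - i)) = 1 := by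
  have hd1 : d 1 = 0 := by
    have h := hd 1 1
    simp only [one_mul, mul_one] at h
    exact (left_eq_add.mp h)
  have h1 : (bar4Op k A + leib4Op k A d) * sig4Op k A
      - sig4Op k A * (bar4Op k A + leib4Op k A d) = 1 := comm_main d hd1
  refine ⟨h1, ?_⟩
  have hchar : ∀ x : Module.End k (stmt4P k A), p • x = 0 := by
    intro x
    rw [← Nat.cast_smul_eq_nsmul k p x, CharP.cast_eq_zero k p, zero_smul]
  exact key_sum p hp hchar (bar4Op k A + leib4Op k A d) (sig4Op k A) h1
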